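/- Let h ∈ L¹(0,1), z ∈ (0,1), δ₁, δ₂ > 0 with h ≥ 0 a.e. on (z-δ₁, z) and h ≤ 0 a.e. on (z, z+δ₂). Suppose u ∈ W^{1,1}(z-δ₁, z) ∩ W^{2,1}_loc(z-δ₁, z) satisfies -(u'/√(1+(u')²))' = h a.e. in (z-δ₁, z), u is bounded on (z-δ₁, z), and ∫_{z-δ₁}^{z} (∫_x^z h(t) dt)^{-1/2} dx = ∞ (with ∫_x^z h > 0 for x < z near z). Then the left Dini derivative u'(z⁻) is finite, i.e. lim_{x→z⁻} u'(x) > -∞. -/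

import Mathlib

open Filter Set MeasureTheory

lemma phi_sq_lt (p : ℝ) : (p / Real.sqrt (1 + p^2))^2 < 1 := by
  have h1 : (0:ℝ) < 1 + p^2 := by positivity
  have hs : 0 < Real.sqrt (1+p^2) := Real.sqrt_pos.2 h1
  rw [div_pow, Real.sq_sqrt h1.le, div_lt_one h1]
  linarith

lemma phi_recover (p : ℝ) :
    (p / Real.sqrt (1+p^2)) / Real.sqrt (1 - (p / Real.sqrt (1+p^2))^2) = p := by
  have h1 : (0:ℝ) < 1 + p^2 := by positivity
  have hs : 0 < Real.sqrt (1+p^2) := Real.sqrt_pos.2 h1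
  have hsq : Real.sqrt (1+p^2)^2 = 1 + p^2 := Real.sq_sqrt h1.le
  have h2 : 1 - (p / Real.sqrt (1+p^2))^2 = ((Real.sqrt (1+p^2))⁻¹)^2 := by
    rw [div_pow, hsq, inv_pow]
    field_simp
    rw [hsq]; ring
  rw [h2, Real.sqrt_sq (by positivity)]
  field_simp

theorem stmt8 (h : ℝ → ℝ) (z δ₁ δ₂ : ℝ) (u u' : ℝ → ℝ)
    (hz : z ∈ Ioo (0:ℝ) 1) (hδ₁ : 0 < δ₁) (hδ₂ : 0 < δ₂)
    (hsub1 : 0 ≤ z - δ₁) (hsub2 : z + δ₂ ≤ 1)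
    (hhint : IntegrableOn h (Ioo 0 1) volume)
    (hpos : ∀ᵐ x ∂(volume.restrict (Ioo (z - δ₁) z)), 0 ≤ h x)
    (hneg : ∀ᵐ x ∂(volume.restrict (Ioo z (z + δ₂))), h x ≤ 0)
    (hderiv : ∀ x ∈ Ioo (z - δ₁) z, HasDerivAt u (u' x) x)
    (hFTC : ∀ x ∈ Ioo (z - δ₁) z, ∀ y ∈ Ioo (z - δ₁) z,
      u' y / Real.sqrt (1 + (u' y) ^ 2) - u' x / Real.sqrt (1 + (u' x) ^ 2)
        = -∫ t in x..y, h t)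
    (hbdd : ∃ C, ∀ x ∈ Ioo (z - δ₁) z, |u x| ≤ C)
    (hIpos : ∀ x ∈ Ioo (z - δ₁) z, 0 < ∫ t in x..z, h t)
    (hdiv : ¬ IntegrableOn (fun x => (∫ t in x..z, h t) ^ (-(1:ℝ)/2))
      (Ioo (z - δ₁) z) volume) :
    ∃ L : ℝ, Tendsto u' (nhdsWithin z (Iio z)) (nhds L) := by
  obtain ⟨C, hC⟩ := hbdd
  -- globalized integrand
  set h₀ : ℝ → ℝ := (Ioo (0:ℝ) 1).indicator h with hh₀def
  have hh₀ : Integrable h₀ volume :=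
    (integrable_indicator_iff measurableSet_Ioo).2 hhint
  set I₀ : ℝ → ℝ := fun x => ∫ t in x..z, h₀ t with hI₀def
  have contI₀ : Continuous I₀ := by
    have : Continuous fun x => ∫ t in z..x, h₀ t := hh₀.continuous_primitive z
    have heq : I₀ = fun x => -∫ t in z..x, h₀ t := by
      funext x
      exact intervalIntegral.integral_symm z x
    rw [heq]; exact this.neg
  have hI₀z : I₀ z = 0 := intervalIntegral.integral_same
  -- I₀ agrees with ∫ t in x..z, h t for x in [0,z]
  have hIeq : ∀ x, 0 ≤ x → x ≤ z → I₀ x = ∫ t in x..z, h t := by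
    intro x hx0 hxz
    have hsub : Ioc x z ⊆ Ioo 0 1 := fun t ht =>
      ⟨lt_of_le_of_lt hx0 ht.1, lt_of_le_of_lt ht.2 hz.2⟩
    show (∫ t in x..z, h₀ t) = ∫ t in x..z, h t
    rw [intervalIntegral.integral_of_le hxz, intervalIntegral.integral_of_le hxz,
      hh₀def, setIntegral_indicator measurableSet_Ioo,
      inter_eq_self_of_subset_left hsub]
  have hmemd : ∀ x ∈ Ioo (z - δ₁) z, 0 ≤ x ∧ x ≤ z := fun x hx =>
    ⟨le_trans hsub1 hx.1.le, hx.2.le⟩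
  -- interval integrability of h between points of [0, z]
  have hInt : ∀ a b : ℝ, 0 ≤ a → a ≤ z → 0 ≤ b → b ≤ z →
      IntervalIntegrable h volume a b := by
    intro a b ha0 haz hb0 hbz
    rw [intervalIntegrable_iff]
    refine hhint.mono_set (fun t ht => ?_)
    rcases ht with ⟨ht1, ht2⟩
    constructor
    · exact lt_of_le_of_lt (le_min ha0 hb0) ht1
    · exact lt_of_le_of_lt (ht2.trans (max_le haz hbz)) hz.2
  set φ : ℝ → ℝ := fun x => u' x / Real.sqrt (1 + (u' x)^2) with hφdef
  have hφlt : ∀ x, (φ x)^2 < 1 := fun x => phi_sq_lt (u' x)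
  have hφabs : ∀ x, -1 < φ x ∧ φ x < 1 := by
    intro x
    exact abs_lt.1 ((sq_lt_one_iff_abs_lt_one (φ x)).1 (hφlt x))
  have hrec : ∀ x, u' x = φ x / Real.sqrt (1 - (φ x)^2) := by
    intro x
    exact (phi_recover (u' x)).symm
  -- the constant c
  have hx₀mem : z - δ₁/2 ∈ Ioo (z - δ₁) z := ⟨by linarith, by linarith⟩
  set x₀ : ℝ := z - δ₁/2 with hx₀def
  set c : ℝ := φ x₀ - I₀ x₀ with hcdef
  have hφeq : ∀ x ∈ Ioo (z - δ₁) z, φ x = c + I₀ x := by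
    intro x hx
    have key : φ x₀ - φ x = -∫ t in x..x₀, h t := hFTC x hx x₀ hx₀mem
    have hx' := hmemd x hx
    have hx₀' := hmemd x₀ hx₀mem
    have hadj : (∫ t in x..x₀, h t) + ∫ t in x₀..z, h t = ∫ t in x..z, h t :=
      intervalIntegral.integral_add_adjacent_intervals
        (hInt x x₀ hx'.1 hx'.2 hx₀'.1 hx₀'.2)
        (hInt x₀ z hx₀'.1 hx₀'.2 (le_trans hz.1.le le_rfl) le_rfl)
    have e1 : I₀ x = ∫ t in x..z, h t := hIeq x hx'.1 hx'.2
    have e2 : I₀ x₀ = ∫ t in x₀..z, h t := hIeq x₀ hx₀'.1 hx₀'.2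
    rw [hcdef]
    linarith [key, hadj, e1, e2]
  have hI₀pos : ∀ x ∈ Ioo (z - δ₁) z, 0 < I₀ x := by
    intro x hx
    rw [hIeq x (hmemd x hx).1 (hmemd x hx).2]
    exact hIpos x hx
  have htendI : Tendsto I₀ (nhdsWithin z (Iio z)) (nhds 0) := by
    have := (contI₀.tendsto z).mono_left (nhdsWithin_le_nhds (s := Iio z))
    rwa [hI₀z] at this
  have hmemIoo : Ioo (z - δ₁) z ∈ nhdsWithin z (Iio z) :=
    Ioo_mem_nhdsLT (by linarith)
  have htendφ : Tendsto φ (nhdsWithin z (Iio z)) (nhds c) := by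
    have h1 : Tendsto (fun x => c + I₀ x) (nhdsWithin z (Iio z)) (nhds (c + 0)) :=
      tendsto_const_nhds.add htendI
    rw [add_zero] at h1
    refine h1.congr' ?_
    filter_upwards [hmemIoo] with x hx
    exact (hφeq x hx).symm
  -- c < 1
  have hc1 : c < 1 := by
    have := (hφabs x₀).2
    have := hI₀pos x₀ hx₀mem
    rw [hcdef]; linarith
  by_cases hcbig : -1 < c
  · -- good case
    refine ⟨c / Real.sqrt (1 - c^2), ?_⟩
    have hpos1 : 0 < 1 - c^2 := by nlinarith
    have hg : ContinuousAt (fun t : ℝ => t / Real.sqrt (1 - t^2)) c := by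
      have hs : Real.sqrt (1 - c^2) ≠ 0 := by positivity
      exact continuousAt_id.div
        ((Real.continuous_sqrt.comp (continuous_const.sub (continuous_pow 2))).continuousAt) hs
    have comp := hg.tendsto.comp htendφ
    refine comp.congr (fun x => (hrec x).symm)
  · -- bad case: c ≤ -1, derive contradiction
    exfalso
    push_neg at hcbig
    -- choose a₀
    obtain ⟨a₁, ha₁, hsub⟩ := mem_nhdsLT_iff_exists_Ioo_subset.1
      (inter_mem (htendI.eventually (eventually_lt_nhds (show (0:ℝ) < 1/2 by norm_num)))
        hmemIoo)
    set a₂ : ℝ := max a₁ (z - δ₁) with ha₂def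
    have ha₂z : a₂ < z := max_lt ha₁ (by linarith)
    have hsub2' : Ioo a₂ z ⊆ Ioo (z - δ₁) z := fun t ht =>
      ⟨lt_of_le_of_lt (le_max_right _ _) ht.1, ht.2⟩
    have hsubI : ∀ t ∈ Ioo a₂ z, I₀ t < 1/2 := fun t ht =>
      (hsub ⟨lt_of_le_of_lt (le_max_left _ _) ht.1, ht.2⟩).1
    set g : ℝ → ℝ := fun t => (Real.sqrt (I₀ t))⁻¹ with hgdef
    have hgnonneg : ∀ t, 0 ≤ g t := fun t => by positivity
    have hgcont : ∀ t ∈ Ioo (z - δ₁) z, ContinuousAt g t := by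
      intro t ht
      have hne : Real.sqrt (I₀ t) ≠ 0 := (Real.sqrt_pos.2 (hI₀pos t ht)).ne'
      exact ((Real.continuous_sqrt.comp contI₀).continuousAt).inv₀ hne
    have hgcontOn : ContinuousOn g (Ioo (z - δ₁) z) :=
      fun t ht => (hgcont t ht).continuousWithinAt
    -- derivative bound
    have hkey : ∀ x ∈ Ioo a₂ z, u' x + 4⁻¹ * g x ≤ 0 := by
      intro x hx
      have hx1 : x ∈ Ioo (z - δ₁) z := hsub2' hx
      have hI2 : I₀ x < 1/2 := hsubI x hx
      have hIp : 0 < I₀ x := hI₀pos x hx1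
      have he : -1 < φ x := (hφabs x).1
      have heI : φ x ≤ -1 + I₀ x := by
        have := hφeq x hx1; linarith
      have hsq : 0 < 1 - (φ x)^2 := by nlinarith [hφlt x]
      have hs : 0 < Real.sqrt (1 - (φ x)^2) := Real.sqrt_pos.2 hsq
      have hsI : 0 < Real.sqrt (I₀ x) := Real.sqrt_pos.2 hIp
      have hsImul : Real.sqrt (I₀ x) * Real.sqrt (I₀ x) = I₀ x :=
        Real.mul_self_sqrt hIp.le
      have h2I : Real.sqrt (1 - (φ x)^2) ≤ 2 * Real.sqrt (I₀ x) := by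
        have h1 : 1 - (φ x)^2 ≤ 2^2 * (I₀ x) := by nlinarith
        have h2 := Real.sqrt_le_sqrt h1
        rwa [Real.sqrt_mul (by norm_num : (0:ℝ) ≤ 2^2),
          Real.sqrt_sq (by norm_num : (0:ℝ) ≤ 2)] at h2
      have hinv : (Real.sqrt (I₀ x))⁻¹ * Real.sqrt (I₀ x) = 1 :=
        inv_mul_cancel₀ hsI.ne'
      have hgoal : φ x / Real.sqrt (1 - (φ x)^2) ≤ -(4⁻¹ * (Real.sqrt (I₀ x))⁻¹) := by
        rw [div_le_iff₀ hs]
        have hb1 : 4⁻¹ * (Real.sqrt (I₀ x))⁻¹ * Real.sqrt (1 - (φ x)^2)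
            ≤ 4⁻¹ * (Real.sqrt (I₀ x))⁻¹ * (2 * Real.sqrt (I₀ x)) := by
          apply mul_le_mul_of_nonneg_left h2I
          positivity
        have hb2 : 4⁻¹ * (Real.sqrt (I₀ x))⁻¹ * (2 * Real.sqrt (I₀ x)) = 1/2 := by
          field_simp
          ring
        nlinarith
      have := hrec x
      rw [this]
      linarith [hgoal]
    -- fix a₀
    set a₀ : ℝ := (a₂ + z)/2 with ha₀def
    have ha₀mem : a₀ ∈ Ioo a₂ z := ⟨by rw [ha₀def]; linarith, by rw [ha₀def]; linarith⟩
    have ha₀mem' : a₀ ∈ Ioo (z - δ₁) z := hsub2' ha₀mem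
    -- integral bound on [a₀, b]
    have hbound : ∀ b ∈ Ioo a₀ z, (∫ t in a₀..b, g t) ≤ 8 * C := by
      intro b hb
      have hab : a₀ ≤ b := hb.1.le
      have hIccsub : Icc a₀ b ⊆ Ioo a₂ z := fun t ht =>
        ⟨lt_of_lt_of_le ha₀mem.1 ht.1, lt_of_le_of_lt ht.2 hb.2⟩
      have hIccsub' : Icc a₀ b ⊆ Ioo (z - δ₁) z := fun t ht => hsub2' (hIccsub ht)
      set G : ℝ → ℝ := fun x => ∫ t in a₀..x, g t with hGdef
      have hG : ∀ x ∈ Icc a₀ b, HasDerivAt G (g x) x := by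
        intro x hxm
        have hxin : x ∈ Ioo (z - δ₁) z := hIccsub' hxm
        apply intervalIntegral.integral_hasDerivAt_right
        · apply ContinuousOn.intervalIntegrable
          apply hgcontOn.mono
          rw [uIcc_of_le hxm.1]
          exact fun t ht => hIccsub' ⟨ht.1, le_trans ht.2 hxm.2⟩
        · exact ContinuousOn.stronglyMeasurableAtFilter isOpen_Ioo hgcontOn x hxin
        · exact hgcont x hxin
      have hF : ∀ x ∈ Icc a₀ b, HasDerivAt (fun y => u y + 4⁻¹ * G y)
          (u' x + 4⁻¹ * g x) x := by
        intro x hxm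
        exact (hderiv x (hIccsub' hxm)).add ((hG x hxm).const_mul 4⁻¹)
      have hanti : AntitoneOn (fun y => u y + 4⁻¹ * G y) (Icc a₀ b) := by
        apply antitoneOn_of_deriv_nonpos (convex_Icc a₀ b)
        · exact fun x hxm => ((hF x hxm).continuousAt).continuousWithinAt
        · intro x hxm
          rw [interior_Icc] at hxm
          exact ((hF x (Ioo_subset_Icc_self hxm)).differentiableAt).differentiableWithinAt
        · intro x hxm
          rw [interior_Icc] at hxm
          rw [(hF x (Ioo_subset_Icc_self hxm)).deriv]
          exact hkey x (hIccsub (Ioo_subset_Icc_self hxm))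
      have hle := hanti (left_mem_Icc.2 hab) (right_mem_Icc.2 hab) hab
      have hGa : G a₀ = 0 := intervalIntegral.integral_same
      simp only [hGa, mul_zero, add_zero] at hle
      have hu1 : |u a₀| ≤ C := hC a₀ ha₀mem'
      have hu2 : |u b| ≤ C := hC b (hsub2' ⟨lt_trans ha₀mem.1 hb.1, hb.2⟩)
      have h1 := abs_le.1 hu1
      have h2 := abs_le.1 hu2
      have : 4⁻¹ * G b ≤ 2 * C := by linarith
      linarith
    -- integrability on (a₀, z)
    have hg_int1 : IntegrableOn g (Ioc a₀ z) volume := by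
      set b : ℕ → ℝ := fun n => z - (z - a₀)/(n+2) with hbdef
      have hbz : ∀ n : ℕ, b n ∈ Ioo a₀ z := by
        intro n
        have h2 : (0:ℝ) < (n:ℝ) + 2 := by positivity
        have hza : 0 < z - a₀ := by linarith [ha₀mem.2]
        constructor
        · rw [hbdef]
          have : (z - a₀)/((n:ℝ)+2) < z - a₀ := by
            apply div_lt_self hza
            have : (0:ℝ) ≤ (n:ℝ) := Nat.cast_nonneg n
            linarith
          simp only []
          linarith
        · rw [hbdef]
          have : 0 < (z - a₀)/((n:ℝ)+2) := div_pos hza h2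
          simp only []
          linarith
      have hbtend : Tendsto b atTop (nhds z) := by
        have h1 : Tendsto (fun n : ℕ => (z - a₀)/((n:ℝ)+2)) atTop (nhds 0) := by
          apply Tendsto.div_atTop (tendsto_const_nhds)
          exact tendsto_atTop_add_const_right atTop 2 tendsto_natCast_atTop_atTop
        have h2 : Tendsto (fun n : ℕ => z - (z - a₀)/((n:ℝ)+2)) atTop (nhds (z - 0)) :=
          tendsto_const_nhds.sub h1
        rw [sub_zero] at h2
        exact h2
      have hfi : ∀ n : ℕ, IntegrableOn g (Ioc a₀ (b n)) volume := by
        intro n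
        have hss : Icc a₀ (b n) ⊆ Ioo (z - δ₁) z := fun t ht =>
          hsub2' ⟨lt_of_lt_of_le ha₀mem.1 ht.1, lt_of_le_of_lt ht.2 (hbz n).2⟩
        exact ((hgcontOn.mono hss).integrableOn_Icc).mono_set Ioc_subset_Icc_self
      apply MeasureTheory.integrableOn_Ioc_of_intervalIntegral_norm_bounded_right
        (I := 8 * C) hfi hbtend
      filter_upwards with n
      have hnrm : (fun x => ‖g x‖) = g := funext fun x => Real.norm_of_nonneg (hgnonneg x)
      calc (∫ x in Ioc a₀ (b n), ‖g x‖) = ∫ x in Ioc a₀ (b n), g x := by rw [hnrm]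
        _ = ∫ x in a₀..(b n), g x := (intervalIntegral.integral_of_le (hbz n).1.le).symm
        _ ≤ 8 * C := hbound (b n) (hbz n)
    -- integrability on (z - δ₁, a₀]
    have hg_int2 : IntegrableOn g (Ioc (z - δ₁) a₀) volume := by
      have hmono : ∀ t ∈ Ioc (z - δ₁) a₀, I₀ a₀ ≤ I₀ t := by
        intro t ht
        have hIccsub : Icc t a₀ ⊆ Ioo (z - δ₁) z := fun s hs =>
          ⟨lt_of_lt_of_le ht.1 hs.1, lt_of_le_of_lt hs.2 ha₀mem'.2⟩
        have hadj : (∫ s in t..a₀, h₀ s) + ∫ s in a₀..z, h₀ s = ∫ s in t..z, h₀ s :=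
          intervalIntegral.integral_add_adjacent_intervals
            hh₀.intervalIntegrable hh₀.intervalIntegrable
        have hnn : 0 ≤ ∫ s in t..a₀, h₀ s := by
          apply intervalIntegral.integral_nonneg_of_ae_restrict ht.2
          have hae : ∀ᵐ s ∂(volume.restrict (Ioo (z - δ₁) z)), 0 ≤ h₀ s := by
            have hss : Ioo (z - δ₁) z ⊆ Ioo (0:ℝ) 1 := fun s hs =>
              ⟨lt_of_le_of_lt hsub1 hs.1, lt_trans hs.2 hz.2⟩
            filter_upwards [hpos, ae_restrict_mem measurableSet_Ioo] with s hs hmem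
            rw [hh₀def, indicator_of_mem (hss hmem)]
            exact hs
          exact ae_restrict_of_ae_restrict_of_subset hIccsub hae
        show I₀ a₀ ≤ I₀ t
        have : I₀ t = (∫ s in t..a₀, h₀ s) + I₀ a₀ := hadj.symm
        linarith
      have hIa₀ : 0 < I₀ a₀ := hI₀pos a₀ ha₀mem'
      apply Measure.integrableOn_of_bounded (M := (Real.sqrt (I₀ a₀))⁻¹)
      · exact (measure_Ioc_lt_top).ne
      · exact ((Real.continuous_sqrt.comp contI₀).measurable.inv).aestronglyMeasurable
      · apply ae_restrict_of_forall_mem measurableSet_Ioc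
        intro t ht
        rw [Real.norm_of_nonneg (hgnonneg t)]
        apply inv_anti₀ (Real.sqrt_pos.2 hIa₀)
        exact Real.sqrt_le_sqrt (hmono t ht)
    -- combine and contradict
    apply hdiv
    have hunion : IntegrableOn g (Ioc (z - δ₁) a₀ ∪ Ioc a₀ z) volume :=
      hg_int2.union hg_int1
    rw [Ioc_union_Ioc_eq_Ioc (by linarith [ha₀mem'.1]) ha₀mem'.2.le] at hunion
    have hgint : IntegrableOn g (Ioo (z - δ₁) z) volume :=
      hunion.mono_set Ioo_subset_Ioc_self
    apply hgint.congr_fun ?_ measurableSet_Ioo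
    intro x hx
    have hIx : I₀ x = ∫ t in x..z, h t := hIeq x (hmemd x hx).1 (hmemd x hx).2
    have hIxpos : 0 < I₀ x := hI₀pos x hx
    show (Real.sqrt (I₀ x))⁻¹ = (∫ t in x..z, h t) ^ (-(1:ℝ)/2)
    rw [← hIx, show (-(1:ℝ)/2) = -((1:ℝ)/2) by ring, Real.rpow_neg hIxpos.le,
      ← Real.sqrt_eq_rpow]
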